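/- Let g ≥ 1, M := g(g+1)/2, and fix the pair-enumeration k ↦ (𝔣₁(k),𝔣₂(k)) of {1,…,M} onto {(i,j) : 1 ≤ i ≤ j ≤ g}. Let Y be an invertible symmetric g×g complex matrix and let A and B be symmetric g×g complex matrices. Then Tr(Y⁻¹ A Y⁻¹ B) = Σ_{m,n=1}^M (2 − δ_{𝔣₁(n)𝔣₂(n)}) · ((Y⁻¹ Y⁻¹))_{nm} · A_m · B_n. -/

import Mathlib

/-- The list of pairs `(i,j)`, `0 ≤ i ≤ j < g` (0-based), in the order
`(1,1),…,(g,g),(1,2),…,(1,g),(2,3),…,(2,g),…,(g-1,g)` of the paper. -/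
def pairList (g : ℕ) : List (ℕ × ℕ) :=
  ((List.range g).map fun i => (i, i)) ++
    (List.range g).flatMap fun i =>
      ((List.range g).filter fun j => i < j).map fun j => (i, j)

/-- The pair-enumeration `k ↦ (𝔣₁(k), 𝔣₂(k))` of `{0,…,M-1}`, `M = g(g+1)/2`,
onto the pairs `(i,j)` with `0 ≤ i ≤ j < g`, as a pair of elements of `Fin g`. -/
def pfin (g : ℕ) (hg : 0 < g) (k : ℕ) : Fin g × Fin g :=
  (⟨((pairList g).getD k (0, 0)).1 % g, Nat.mod_lt _ hg⟩,
   ⟨((pairList g).getD k (0, 0)).2 % g, Nat.mod_lt _ hg⟩)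

/-- The doubled-index construction
`(AA)_{kl} = (A_{𝔣₁(k)𝔣₁(l)} A_{𝔣₂(k)𝔣₂(l)} + A_{𝔣₁(k)𝔣₂(l)} A_{𝔣₂(k)𝔣₁(l)}) / (1 + δ_{𝔣₁(l)𝔣₂(l)})`. -/
noncomputable def ddMat {g : ℕ} (hg : 0 < g) (A : Matrix (Fin g) (Fin g) ℂ)
    (k l : ℕ) : ℂ :=
  (A (pfin g hg k).1 (pfin g hg l).1 * A (pfin g hg k).2 (pfin g hg l).2 +
      A (pfin g hg k).1 (pfin g hg l).2 * A (pfin g hg k).2 (pfin g hg l).1) /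
    (1 + if (pfin g hg l).1 = (pfin g hg l).2 then (1 : ℂ) else 0)


section aux

/-- membership in `pairList`. -/
lemma mem_pairList {g : ℕ} {p : ℕ × ℕ} :
    p ∈ pairList g ↔ p.1 ≤ p.2 ∧ p.2 < g := by
  obtain ⟨a, b⟩ := p
  simp only [pairList, List.mem_append, List.mem_map, List.mem_flatMap, List.mem_filter,
    List.mem_range, Prod.mk.injEq, decide_eq_true_eq]
  constructor
  · rintro (⟨i, hi, rfl, rfl⟩ | ⟨i, hi, j, ⟨hj, hij⟩, rfl, rfl⟩) <;> omega
  · rintro ⟨hab, hb⟩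
    rcases Nat.lt_or_ge a b with h | h
    · exact Or.inr ⟨a, by omega, b, ⟨hb, h⟩, rfl, rfl⟩
    · exact Or.inl ⟨a, by omega, rfl, by omega⟩

lemma nodup_pairList (g : ℕ) : (pairList g).Nodup := by
  apply List.Nodup.append
  · exact (@List.nodup_range g).map (fun i j h => by simpa using congrArg Prod.fst h)
  · rw [List.nodup_flatMap]
    constructor
    · intro i _
      exact ((@List.nodup_range g).filter _).map (fun a b h => by simpa using congrArg Prod.snd h)
    · refine (@List.nodup_range g).imp ?_
      intro a b hab p hp hq
      simp only [List.mem_map, List.mem_filter] at hp hq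
      obtain ⟨j, _, rfl⟩ := hp
      obtain ⟨j', _, h⟩ := hq
      exact hab (by simpa using (congrArg Prod.fst h).symm)
  · intro p hp hq
    simp only [List.mem_map, List.mem_range] at hp
    obtain ⟨i, _, rfl⟩ := hp
    simp only [List.mem_flatMap, List.mem_map, List.mem_filter, List.mem_range,
      decide_eq_true_eq] at hq
    obtain ⟨a, _, b, ⟨_, hab⟩, h, h2⟩ := hq
    omega

lemma length_filter_range (g i : ℕ) :
    ((List.range g).filter fun j => decide (i < j)).length = g - (i + 1) := by
  induction g with
  | zero => simp
  | succ n ih =>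
    rw [List.range_succ, List.filter_append, List.length_append, ih]
    by_cases h : i < n
    · simp [h]; omega
    · simp [h]; omega

lemma length_pairList (g : ℕ) : (pairList g).length = g * (g + 1) / 2 := by
  have hsum : ∑ i ∈ Finset.range g, (g - 1 - i) = ∑ i ∈ Finset.range g, i :=
    Finset.sum_range_reflect (fun i => i) g
  have hgauss := Finset.sum_range_id_mul_two g
  simp only [pairList, List.length_append, List.length_map, List.length_flatMap,
    List.length_range, List.map_map]
  have hls : ∀ (f : ℕ → ℕ) (n : ℕ), ((List.range n).map f).sum = ∑ i ∈ Finset.range n, f i := by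
    intro f n
    induction n with
    | zero => simp
    | succ n ih =>
      rw [List.range_succ, List.map_append, List.sum_append, Finset.sum_range_succ, ih]; simp
  have : ((List.range g).map (fun a => ((List.range g).filter
      fun j => decide (a < j)).length)).sum
      = ∑ i ∈ Finset.range g, (g - 1 - i) := by
    rw [hls]
    apply Finset.sum_congr rfl
    intro i _
    simp only [Function.comp_apply, List.length_map, length_filter_range]
    omega
  rw [this, hsum]
  set s := ∑ i ∈ Finset.range g, i
  set t := g * g
  have h1 : s * 2 = g * (g - 1) := hgauss
  have h2 : g * (g - 1) + g = t := by cases g <;> simp [t] <;> ring_nf <;> omega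
  have h3 : g * (g + 1) = t + g := by simp [t]; ring
  omega

/-- Sum over the index range equals sum over the set of ordered `Fin` pairs. -/
lemma sum_pfin {g : ℕ} (hg : 0 < g) (F : Fin g × Fin g → ℂ) :
    ∑ m ∈ Finset.range (g * (g + 1) / 2), F (pfin g hg m) =
      ∑ q ∈ Finset.univ.filter (fun q : Fin g × Fin g => q.1 ≤ q.2), F q := by
  have hlen := length_pairList g
  have hnd := nodup_pairList g
  apply Finset.sum_bij (fun m _ => pfin g hg m)
  · intro m hm
    simp only [Finset.mem_range] at hm
    have hm' : m < (pairList g).length := by omega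
    have hmem : (pairList g)[m] ∈ pairList g := List.getElem_mem hm'
    rw [mem_pairList] at hmem
    simp only [Finset.mem_filter, Finset.mem_univ, true_and]
    show (_ : Fin g) ≤ _
    rw [Fin.le_def]
    simp only [pfin, List.getD_eq_getElem _ _ hm']
    rw [Nat.mod_eq_of_lt (by omega), Nat.mod_eq_of_lt (by omega)]
    exact hmem.1
  · intro m1 hm1 m2 hm2 h
    simp only [Finset.mem_range] at hm1 hm2
    have hm1' : m1 < (pairList g).length := by omega
    have hm2' : m2 < (pairList g).length := by omega
    have e1 := (mem_pairList.mp (List.getElem_mem hm1'))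
    have e2 := (mem_pairList.mp (List.getElem_mem hm2'))
    rw [← hnd.getElem_inj_iff (hi := hm1') (hj := hm2')]
    have h1 := congrArg (fun q => (q.1 : ℕ)) h
    have h2 := congrArg (fun q => (q.2 : ℕ)) h
    simp only [pfin, List.getD_eq_getElem _ _ hm1', List.getD_eq_getElem _ _ hm2'] at h1 h2
    rw [Nat.mod_eq_of_lt (by omega), Nat.mod_eq_of_lt (by omega)] at h1
    rw [Nat.mod_eq_of_lt (by omega), Nat.mod_eq_of_lt (by omega)] at h2
    exact Prod.ext h1 h2
  · intro q hq
    simp only [Finset.mem_filter, Finset.mem_univ, true_and] at hq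
    have : ((q.1 : ℕ), (q.2 : ℕ)) ∈ pairList g := mem_pairList.mpr ⟨hq, q.2.isLt⟩
    obtain ⟨m, hm, hme⟩ := List.mem_iff_getElem.mp this
    refine ⟨m, by simp only [Finset.mem_range]; omega, ?_⟩
    have h1 : ((pairList g)[m].1 : ℕ) = (q.1 : ℕ) := by rw [hme]
    have h2 : ((pairList g)[m].2 : ℕ) = (q.2 : ℕ) := by rw [hme]
    simp only [pfin, List.getD_eq_getElem _ _ hm]
    ext
    · simp [h1, Nat.mod_eq_of_lt q.1.isLt]
    · simp [h2, Nat.mod_eq_of_lt q.2.isLt]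
  · intro m hm; rfl

end aux

open Finset in
/-- Fold a full sum over pairs into a sum over ordered pairs `p.1 ≤ p.2`. -/
lemma sum_pairs_fold {g : ℕ} (f : Fin g × Fin g → ℂ) :
    ∑ p : Fin g × Fin g, f p =
      ∑ p ∈ Finset.univ.filter (fun p : Fin g × Fin g => p.1 ≤ p.2),
        (f p + f p.swap) / (1 + if p.1 = p.2 then (1 : ℂ) else 0) := by
  symm
  rw [← Finset.sum_filter_add_sum_filter_not
    (Finset.univ.filter (fun p : Fin g × Fin g => p.1 ≤ p.2))
    (fun p : Fin g × Fin g => p.1 = p.2)]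
  rw [Finset.filter_filter, Finset.filter_filter]
  have e1 : (Finset.univ.filter fun p : Fin g × Fin g => p.1 ≤ p.2 ∧ p.1 = p.2)
      = Finset.univ.filter fun p : Fin g × Fin g => p.1 = p.2 := by
    ext p; constructor <;> simp +contextual [le_of_eq]
  have e2 : (Finset.univ.filter fun p : Fin g × Fin g => p.1 ≤ p.2 ∧ ¬ p.1 = p.2)
      = Finset.univ.filter fun p : Fin g × Fin g => p.1 < p.2 := by
    ext p; simp [lt_iff_le_and_ne]
  rw [e1, e2]
  have d1 : ∀ p ∈ Finset.univ.filter fun p : Fin g × Fin g => p.1 = p.2,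
      (f p + f p.swap) / (1 + if p.1 = p.2 then (1 : ℂ) else 0) = f p := by
    intro p hp
    simp only [Finset.mem_filter] at hp
    have : p.swap = p := by ext <;> simp [hp.2]
    rw [this, if_pos hp.2]; ring
  have d2 : ∀ p ∈ Finset.univ.filter fun p : Fin g × Fin g => p.1 < p.2,
      (f p + f p.swap) / (1 + if p.1 = p.2 then (1 : ℂ) else 0) = f p + f p.swap := by
    intro p hp
    simp only [Finset.mem_filter] at hp
    rw [if_neg (ne_of_lt hp.2)]; ring
  rw [Finset.sum_congr rfl d1, Finset.sum_congr rfl d2, Finset.sum_add_distrib]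
  rw [← Finset.sum_filter_add_sum_filter_not Finset.univ (fun p : Fin g × Fin g => p.1 ≤ p.2) f]
  have hswap : ∑ p ∈ Finset.univ.filter (fun p : Fin g × Fin g => ¬ p.1 ≤ p.2), f p
      = ∑ p ∈ Finset.univ.filter (fun p : Fin g × Fin g => p.1 < p.2), f p.swap := by
    apply Finset.sum_nbij' (fun p => Prod.swap p) (fun p => Prod.swap p) <;>
      simp [Prod.swap, lt_iff_le_and_ne, not_le, lt_iff_le_not_ge]
  rw [hswap]
  rw [← Finset.sum_filter_add_sum_filter_not
    (Finset.univ.filter (fun p : Fin g × Fin g => p.1 ≤ p.2))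
    (fun p : Fin g × Fin g => p.1 = p.2) f]
  rw [Finset.filter_filter, Finset.filter_filter, e1, e2]
  abel

/-- The core identity, over `Fin` pairs. -/
lemma trace_pairs {g : ℕ} (W A B : Matrix (Fin g) (Fin g) ℂ)
    (hW : W.IsSymm) (hA : A.IsSymm) (hB : B.IsSymm) :
    Matrix.trace (W * A * W * B) =
      ∑ p ∈ Finset.univ.filter (fun p : Fin g × Fin g => p.1 ≤ p.2),
        ∑ q ∈ Finset.univ.filter (fun q : Fin g × Fin g => q.1 ≤ q.2),
          (2 - if q.1 = q.2 then (1 : ℂ) else 0) *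
            ((W q.1 p.1 * W q.2 p.2 + W q.1 p.2 * W q.2 p.1) /
              (1 + if p.1 = p.2 then (1 : ℂ) else 0)) *
            A p.1 p.2 * B q.1 q.2 := by
  set T := Finset.univ.filter (fun p : Fin g × Fin g => p.1 ≤ p.2) with hT
  set N : (Fin g × Fin g) → (Fin g × Fin g) → ℂ := fun q p =>
    (W q.1 p.1 * W q.2 p.2 + W q.1 p.2 * W q.2 p.1) * A p.1 p.2 * B q.1 q.2 /
      (1 + if p.1 = p.2 then (1 : ℂ) else 0) with hN
  have expand : Matrix.trace (W * A * W * B) =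
      ∑ k : Fin g, ∑ l : Fin g, ∑ j : Fin g, ∑ i : Fin g,
        W k i * A i j * W j l * B l k := by
    simp only [Matrix.trace, Matrix.diag, Matrix.mul_apply, Finset.sum_mul, Finset.mul_sum]
  have step1 : ∀ k l : Fin g, (∑ j : Fin g, ∑ i : Fin g, W k i * A i j * W j l * B l k)
      = ∑ p ∈ T, N (k, l) p := by
    intro k l
    have h0 : (∑ j : Fin g, ∑ i : Fin g, W k i * A i j * W j l * B l k)
        = ∑ p : Fin g × Fin g, W k p.1 * W l p.2 * A p.1 p.2 * B k l := by
      rw [Fintype.sum_prod_type, Finset.sum_comm]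
      refine Finset.sum_congr rfl fun j _ => Finset.sum_congr rfl fun i _ => ?_
      simp only [hW.apply l i, hB.apply k l]
      ring
    rw [h0, sum_pairs_fold]
    refine Finset.sum_congr rfl fun p _ => ?_
    simp only [Prod.fst_swap, Prod.snd_swap, hN]
    rw [hA.apply p.1 p.2]
    ring
  have step2 : Matrix.trace (W * A * W * B) = ∑ q : Fin g × Fin g, ∑ p ∈ T, N q p := by
    rw [expand, Fintype.sum_prod_type]
    exact Finset.sum_congr rfl fun k _ => Finset.sum_congr rfl fun l _ => step1 k l
  rw [step2, Finset.sum_comm]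
  refine Finset.sum_congr rfl fun p hp => ?_
  rw [sum_pairs_fold (fun q => N q p)]
  refine Finset.sum_congr rfl fun q hq => ?_
  have hNswap : N q.swap p = N q p := by
    simp only [hN, Prod.fst_swap, Prod.snd_swap]
    rw [hB.apply q.1 q.2]
    ring
  rw [hNswap]
  by_cases hqq : q.1 = q.2
  · rw [if_pos hqq]
    rw [div_eq_iff (by norm_num : (1 : ℂ) + 1 ≠ 0)]
    simp only [hN]
    ring
  · rw [if_neg hqq]
    simp only [hN]
    ring

/-- **Proposition 5.1**: for `Y` invertible symmetric and `A`, `B` symmetric,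
`Tr(Y⁻¹ A Y⁻¹ B) = ∑_{m,n=1}^M (2 - δ_{𝔣₁(n)𝔣₂(n)}) (Y⁻¹Y⁻¹)_{nm} A_m B_n`. -/
theorem siegel_metric_pair_indices (g : ℕ) (hg : 0 < g)
    (Y A B : Matrix (Fin g) (Fin g) ℂ) (hY : IsUnit Y.det)
    (hYs : Y.IsSymm) (hAs : A.IsSymm) (hBs : B.IsSymm) :
    Matrix.trace (Y⁻¹ * A * Y⁻¹ * B) =
      ∑ m ∈ Finset.range (g * (g + 1) / 2), ∑ n ∈ Finset.range (g * (g + 1) / 2),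
        (2 - if (pfin g hg n).1 = (pfin g hg n).2 then (1 : ℂ) else 0) *
          ddMat hg Y⁻¹ n m *
          A (pfin g hg m).1 (pfin g hg m).2 *
          B (pfin g hg n).1 (pfin g hg n).2 := by
  have hYsE : Y.transpose = Y := hYs
  have hW : (Y⁻¹).IsSymm := by
    show (Y⁻¹).transpose = Y⁻¹
    rw [Matrix.transpose_nonsing_inv, hYsE]
  rw [trace_pairs Y⁻¹ A B hW hAs hBs]
  set T := Finset.univ.filter (fun p : Fin g × Fin g => p.1 ≤ p.2) with hT
  set H : (Fin g × Fin g) → (Fin g × Fin g) → ℂ := fun p q =>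
    (2 - if q.1 = q.2 then (1 : ℂ) else 0) *
      ((Y⁻¹ q.1 p.1 * Y⁻¹ q.2 p.2 + Y⁻¹ q.1 p.2 * Y⁻¹ q.2 p.1) /
        (1 + if p.1 = p.2 then (1 : ℂ) else 0)) *
      A p.1 p.2 * B q.1 q.2 with hH
  have h2 : ∑ m ∈ Finset.range (g * (g + 1) / 2), ∑ n ∈ Finset.range (g * (g + 1) / 2),
        (2 - if (pfin g hg n).1 = (pfin g hg n).2 then (1 : ℂ) else 0) *
          ddMat hg Y⁻¹ n m *
          A (pfin g hg m).1 (pfin g hg m).2 *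
          B (pfin g hg n).1 (pfin g hg n).2
      = ∑ p ∈ T, ∑ q ∈ T, H p q := by
    calc ∑ m ∈ Finset.range (g * (g + 1) / 2), ∑ n ∈ Finset.range (g * (g + 1) / 2),
        (2 - if (pfin g hg n).1 = (pfin g hg n).2 then (1 : ℂ) else 0) *
          ddMat hg Y⁻¹ n m *
          A (pfin g hg m).1 (pfin g hg m).2 *
          B (pfin g hg n).1 (pfin g hg n).2
        = ∑ m ∈ Finset.range (g * (g + 1) / 2), ∑ q ∈ T, H (pfin g hg m) q := by
          refine Finset.sum_congr rfl fun m _ => ?_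
          exact sum_pfin hg (fun q => H (pfin g hg m) q)
      _ = ∑ p ∈ T, ∑ q ∈ T, H p q := sum_pfin hg (fun p => ∑ q ∈ T, H p q)
  rw [h2]
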